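/- Let ε, δ > 0, λ ∈ ℝ, λ ≠ 0, and let α, β, ρ, σ : ℤ → ℝ be sequences. Define a_n = ε Σ_k^n α_k, b_n = ε Σ_k^n β_k, c_n = ε Σ_k^n a_k β_k, r_m = δ Σ_k^m ρ_k, s_m = δ Σ_k^m σ_k, t_m = δ Σ_k^m r_k σ_k (bidirectional sums). Define F⁺_n = [[1,0,0],[b_n λ,1,0],[c_n λ², a_n λ,1]] and G⁻_m = [[1, s_m λ⁻¹, 0],[0,1,0],[r_m λ⁻¹, t_m λ⁻², 1]]. Then F⁺_0 = G⁻_0 = I, and for all n, m ∈ ℤ: F⁺_{n+1} = F⁺_n · ξ⁺_n and G⁻_{m+1} = G⁻_m · ξ⁻_m, where ξ⁺_n = [[1,0,0],[β_{n+1}ελ,1,0],[α_{n+1}β_{n+1}ε²λ², α_{n+1}ελ, 1]] and ξ⁻_m = [[1, σ_{m+1}δλ⁻¹, 0],[0,1,0],[ρ_{m+1}δλ⁻¹, σ_{m+1}ρ_{m+1}δ²λ⁻², 1]]. -/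

import Mathlib

/-- Bidirectional sum: `Σ_k^n x_k = Σ_{k=1}^n x_k` for `n ≥ 1`, `0` for `n = 0`, and
`−Σ_{k=n+1}^0 x_k` for `n ≤ −1`. -/
noncomputable def bsum (x : ℤ → ℝ) (n : ℤ) : ℝ :=
  if 1 ≤ n then ∑ k ∈ Finset.Icc (1:ℤ) n, x k
  else if n = 0 then 0
  else -∑ k ∈ Finset.Icc (n+1) (0:ℤ), x k

lemma bsum_succ (x : ℤ → ℝ) (n : ℤ) : bsum x (n + 1) = bsum x n + x (n + 1) := by
  unfold bsum
  rcases lt_trichotomy n 0 with hn | hn | hn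
  · have h1 : ¬ (1 ≤ n) := by omega
    rcases eq_or_lt_of_le (by omega : n ≤ -1) with h | h
    · subst h; norm_num
    · have h2 : ¬ (1 ≤ n + 1) := by omega
      have h3 : n + 1 ≠ 0 := by omega
      have h4 : n ≠ 0 := by omega
      simp only [if_neg h1, if_neg h2, if_neg h3, if_neg h4]
      have he : Finset.Icc (n + 1) (0 : ℤ) = insert (n + 1) (Finset.Icc (n + 1 + 1) 0) := by
        ext k; simp [Finset.mem_Icc, Finset.mem_insert]; omega
      rw [he, Finset.sum_insert (by simp)]
      ring
  · subst hn; norm_num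
  · have h1 : 1 ≤ n := by omega
    have h2 : 1 ≤ n + 1 := by omega
    simp only [if_pos h1, if_pos h2]
    have he : Finset.Icc (1:ℤ) (n + 1) = insert (n + 1) (Finset.Icc 1 n) := by
      ext k; simp [Finset.mem_Icc, Finset.mem_insert]; omega
    rw [he, Finset.sum_insert (by simp)]
    ring

/-- The explicit solutions `F⁺_n`, `G⁻_m` of the discrete ODEs `F⁺_{n+1} = F⁺_n ξ⁺_n`,
`G⁻_{m+1} = G⁻_m ξ⁻_m` given by the discrete normalized potentials (case `H = 0`). -/
theorem stmt9 (ε δ : ℝ) (hε : 0 < ε) (hδ : 0 < δ) (lam : ℝ) (hlam : lam ≠ 0)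
    (α β ρ σ : ℤ → ℝ)
    (a b c r s t : ℤ → ℝ)
    (ha : ∀ n, a n = ε * bsum α n)
    (hb : ∀ n, b n = ε * bsum β n)
    (hc : ∀ n, c n = ε * bsum (fun k => a k * β k) n)
    (hr : ∀ m, r m = δ * bsum ρ m)
    (hs : ∀ m, s m = δ * bsum σ m)
    (ht : ∀ m, t m = δ * bsum (fun k => r k * σ k) m)
    (Fp Gm : ℤ → Matrix (Fin 3) (Fin 3) ℝ)
    (hFp : ∀ n, Fp n = !![1, 0, 0;
                          b n * lam, 1, 0;
                          c n * lam ^ 2, a n * lam, 1])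
    (hGm : ∀ m, Gm m = !![1, s m * lam⁻¹, 0;
                          0, 1, 0;
                          r m * lam⁻¹, t m * lam⁻¹ ^ 2, 1]) :
    Fp 0 = 1 ∧ Gm 0 = 1 ∧
    (∀ n : ℤ, Fp (n+1) = Fp n *
      !![1, 0, 0;
         β (n+1) * ε * lam, 1, 0;
         α (n+1) * β (n+1) * ε ^ 2 * lam ^ 2, α (n+1) * ε * lam, 1]) ∧
    (∀ m : ℤ, Gm (m+1) = Gm m *
      !![1, σ (m+1) * δ * lam⁻¹, 0;
         0, 1, 0;
         ρ (m+1) * δ * lam⁻¹, σ (m+1) * ρ (m+1) * δ ^ 2 * lam⁻¹ ^ 2, 1]) := by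
  have ha0 : a 0 = 0 := by simp [ha, bsum]
  have hb0 : b 0 = 0 := by simp [hb, bsum]
  have hc0 : c 0 = 0 := by simp [hc, bsum]
  have hr0 : r 0 = 0 := by simp [hr, bsum]
  have hs0 : s 0 = 0 := by simp [hs, bsum]
  have ht0 : t 0 = 0 := by simp [ht, bsum]
  have haS : ∀ n, a (n + 1) = a n + ε * α (n + 1) := fun n => by
    simp [ha, bsum_succ]; ring
  have hbS : ∀ n, b (n + 1) = b n + ε * β (n + 1) := fun n => by
    simp [hb, bsum_succ]; ring
  have hcS : ∀ n, c (n + 1) = c n + ε * (a (n + 1) * β (n + 1)) := fun n => by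
    simp [hc, bsum_succ]; ring
  have hrS : ∀ m, r (m + 1) = r m + δ * ρ (m + 1) := fun m => by
    simp [hr, bsum_succ]; ring
  have hsS : ∀ m, s (m + 1) = s m + δ * σ (m + 1) := fun m => by
    simp [hs, bsum_succ]; ring
  have htS : ∀ m, t (m + 1) = t m + δ * (r (m + 1) * σ (m + 1)) := fun m => by
    simp [ht, bsum_succ]; ring
  refine ⟨?_, ?_, ?_, ?_⟩
  · rw [hFp, ha0, hb0, hc0]
    ext i j
    fin_cases i <;> fin_cases j <;> simp [Matrix.one_apply, Matrix.vecHead, Matrix.vecTail]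
  · rw [hGm, hr0, hs0, ht0]
    ext i j
    fin_cases i <;> fin_cases j <;> simp [Matrix.one_apply, Matrix.vecHead, Matrix.vecTail]
  · intro n
    rw [hFp, hFp, hbS, haS, hcS, haS]
    ext i j
    fin_cases i <;> fin_cases j <;>
      simp [Matrix.mul_apply, Fin.sum_univ_succ] <;> ring
  · intro m
    rw [hGm, hGm, hrS, hsS, htS, hrS]
    ext i j
    fin_cases i <;> fin_cases j <;>
      simp [Matrix.mul_apply, Fin.sum_univ_succ] <;> ring
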